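/- Let X and Y be Hermitian d×d complex matrices. Then tr((X ⊗ X ⊗ Y ⊗ Y) P_sym^4) ≤ (13/6) · tr((X ⊗ X) P_sym^2) · tr((Y ⊗ Y) P_sym^2), where the tensor products are Kronecker products. -/

import Mathlib

open Matrix

/-- The unitary on `(ℂ^d)^{⊗k}` permuting the tensor factors according to `σ`,
written as a matrix indexed by functions `Fin k → Fin d`. -/
noncomputable def permMatrix (d k : ℕ) (σ : Equiv.Perm (Fin k)) :
    Matrix (Fin k → Fin d) (Fin k → Fin d) ℂ :=
  Matrix.of fun f g => if f = g ∘ σ then 1 else 0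

/-- The orthogonal projector `P_sym^k = (1/k!) ∑_{σ ∈ S_k} U_σ`
onto the symmetric subspace of `(ℂ^d)^{⊗k}`. -/
noncomputable def psym (d k : ℕ) : Matrix (Fin k → Fin d) (Fin k → Fin d) ℂ :=
  ((Nat.factorial k : ℂ))⁻¹ • ∑ σ : Equiv.Perm (Fin k), permMatrix d k σ

/-- The fourfold tensor (Kronecker) product `A ⊗ B ⊗ C ⊗ D`,
indexed by functions `Fin 4 → Fin d`. -/
noncomputable def tens4 {d : ℕ} (A B C D : Matrix (Fin d) (Fin d) ℂ) :
    Matrix (Fin 4 → Fin d) (Fin 4 → Fin d) ℂ :=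
  Matrix.of fun f g => A (f 0) (g 0) * B (f 1) (g 1) * C (f 2) (g 2) * D (f 3) (g 3)

/-- The twofold tensor (Kronecker) product `A ⊗ B`, indexed by functions `Fin 2 → Fin d`. -/
noncomputable def tens2 {d : ℕ} (A B : Matrix (Fin d) (Fin d) ℂ) :
    Matrix (Fin 2 → Fin d) (Fin 2 → Fin d) ℂ :=
  Matrix.of fun f g => A (f 0) (g 0) * B (f 1) (g 1)

lemma trace_mul_perm (d k : ℕ) (M : Matrix (Fin k → Fin d) (Fin k → Fin d) ℂ)
    (σ : Equiv.Perm (Fin k)) :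
    Matrix.trace (M * permMatrix d k σ) = ∑ f, M f (f ∘ σ) := by
  simp [Matrix.trace, Matrix.diag, Matrix.mul_apply, permMatrix, eq_comm]

lemma trace_mul_psym (d k : ℕ) (M : Matrix (Fin k → Fin d) (Fin k → Fin d) ℂ) :
    Matrix.trace (M * psym d k)
      = ((Nat.factorial k : ℂ))⁻¹ * ∑ σ : Equiv.Perm (Fin k), ∑ f, M f (f ∘ σ) := by
  simp only [psym, Matrix.mul_smul, Matrix.trace_smul, Matrix.mul_sum, Matrix.trace_sum,
    smul_eq_mul, trace_mul_perm]

def pp4 (v w : Fin 4 → Fin 4) (h1 : Function.LeftInverse w v := by decide)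
    (h2 : Function.RightInverse w v := by decide) : Equiv.Perm (Fin 4) := ⟨v, w, h1, h2⟩
def pp2 (v w : Fin 2 → Fin 2) (h1 : Function.LeftInverse w v := by decide)
    (h2 : Function.RightInverse w v := by decide) : Equiv.Perm (Fin 2) := ⟨v, w, h1, h2⟩

lemma s2enum : (Finset.univ : Finset (Equiv.Perm (Fin 2)))
    = {pp2 ![0,1] ![0,1], pp2 ![1,0] ![1,0]} := by decide

lemma s4enum : (Finset.univ : Finset (Equiv.Perm (Fin 4))) =
    {pp4 ![0,1,2,3] ![0,1,2,3], pp4 ![1,0,2,3] ![1,0,2,3], pp4 ![0,1,3,2] ![0,1,3,2],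
     pp4 ![2,1,0,3] ![2,1,0,3], pp4 ![3,1,2,0] ![3,1,2,0], pp4 ![0,2,1,3] ![0,2,1,3],
     pp4 ![0,3,2,1] ![0,3,2,1], pp4 ![1,0,3,2] ![1,0,3,2], pp4 ![2,3,0,1] ![2,3,0,1],
     pp4 ![3,2,1,0] ![3,2,1,0], pp4 ![1,2,0,3] ![2,0,1,3], pp4 ![2,0,1,3] ![1,2,0,3],
     pp4 ![1,3,2,0] ![3,0,2,1], pp4 ![3,0,2,1] ![1,3,2,0], pp4 ![2,1,3,0] ![3,1,0,2],
     pp4 ![3,1,0,2] ![2,1,3,0], pp4 ![0,2,3,1] ![0,3,1,2], pp4 ![0,3,1,2] ![0,2,3,1],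
     pp4 ![1,2,3,0] ![3,0,1,2], pp4 ![1,3,0,2] ![2,0,3,1], pp4 ![2,3,1,0] ![3,2,0,1],
     pp4 ![2,0,3,1] ![1,3,0,2], pp4 ![3,2,0,1] ![2,3,1,0], pp4 ![3,0,1,2] ![1,2,3,0]} := by
  decide

def E4 (d : ℕ) : (Fin d × Fin d × Fin d × Fin d) ≃ (Fin 4 → Fin d) where
  toFun p := ![p.1, p.2.1, p.2.2.1, p.2.2.2]
  invFun f := (f 0, f 1, f 2, f 3)
  left_inv p := rfl
  right_inv f := by funext i; fin_cases i <;> rfl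

lemma sum4 {d : ℕ} (F : Fin d → Fin d → Fin d → Fin d → ℂ) :
    (∑ f : Fin 4 → Fin d, F (f 0) (f 1) (f 2) (f 3))
      = ∑ a, ∑ b, ∑ c, ∑ e, F a b c e := by
  rw [← Fintype.sum_equiv (E4 d) _ (fun f => F (f 0) (f 1) (f 2) (f 3)) (fun p => rfl)]
  simp only [Fintype.sum_prod_type]
  rfl

def E2 (d : ℕ) : (Fin d × Fin d) ≃ (Fin 2 → Fin d) where
  toFun p := ![p.1, p.2]
  invFun f := (f 0, f 1)
  left_inv p := rfl
  right_inv f := by funext i; fin_cases i <;> rfl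

lemma sum2 {d : ℕ} (F : Fin d → Fin d → ℂ) :
    (∑ f : Fin 2 → Fin d, F (f 0) (f 1)) = ∑ a, ∑ b, F a b := by
  rw [← Fintype.sum_equiv (E2 d) _ (fun f => F (f 0) (f 1)) (fun p => rfl)]
  simp only [Fintype.sum_prod_type]
  rfl

noncomputable def w1 {d : ℕ} (X : Matrix (Fin d) (Fin d) ℂ) : ℂ := ∑ i, X i i
noncomputable def w2 {d : ℕ} (X Y : Matrix (Fin d) (Fin d) ℂ) : ℂ := ∑ i, ∑ j, X i j * Y j i
noncomputable def w3 {d : ℕ} (X Y Z : Matrix (Fin d) (Fin d) ℂ) : ℂ :=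
  ∑ i, ∑ j, ∑ k, X i j * Y j k * Z k i
noncomputable def w4 {d : ℕ} (X Y Z W : Matrix (Fin d) (Fin d) ℂ) : ℂ :=
  ∑ i, ∑ j, ∑ k, ∑ l, X i j * Y j k * Z k l * W l i
lemma case1 (d : ℕ) (X Y : Matrix (Fin d) (Fin d) ℂ) :
    (∑ f : Fin 4 → Fin d, tens4 X X Y Y f (f ∘ pp4 ![0,1,2,3] ![0,1,2,3]))
      = w1 X * w1 X * w1 Y * w1 Y := by
  rw [show (∑ f : Fin 4 → Fin d, tens4 X X Y Y f (f ∘ pp4 ![0,1,2,3] ![0,1,2,3]))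
      = ∑ a, ∑ b, ∑ c, ∑ e, X a a * X b b * Y c c * Y e e from sum4 (fun a b c e => X a a * X b b * Y c c * Y e e)]
  conv_lhs => enter [2, a, 2, b]; rw [Finset.sum_comm]
  conv_lhs => enter [2, a]; rw [Finset.sum_comm]
  conv_lhs => rw [Finset.sum_comm]
  conv_lhs => enter [2, a, 2, b]; rw [Finset.sum_comm]
  conv_lhs => enter [2, a]; rw [Finset.sum_comm]
  conv_lhs => enter [2, a, 2, b]; rw [Finset.sum_comm]
  simp only [w1, w2, w3, w4, Finset.sum_mul, Finset.mul_sum]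
  try exact Finset.sum_congr rfl fun _ _ => Finset.sum_congr rfl fun _ _ =>
    Finset.sum_congr rfl fun _ _ => Finset.sum_congr rfl fun _ _ => by ring

lemma case2 (d : ℕ) (X Y : Matrix (Fin d) (Fin d) ℂ) :
    (∑ f : Fin 4 → Fin d, tens4 X X Y Y f (f ∘ pp4 ![1,0,2,3] ![1,0,2,3]))
      = w2 X X * w1 Y * w1 Y := by
  rw [show (∑ f : Fin 4 → Fin d, tens4 X X Y Y f (f ∘ pp4 ![1,0,2,3] ![1,0,2,3]))
      = ∑ a, ∑ b, ∑ c, ∑ e, X a b * X b a * Y c c * Y e e from sum4 (fun a b c e => X a b * X b a * Y c c * Y e e)]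
  conv_lhs => enter [2, a, 2, b]; rw [Finset.sum_comm]
  conv_lhs => enter [2, a]; rw [Finset.sum_comm]
  conv_lhs => rw [Finset.sum_comm]
  conv_lhs => enter [2, a, 2, b]; rw [Finset.sum_comm]
  conv_lhs => enter [2, a]; rw [Finset.sum_comm]
  simp only [w1, w2, w3, w4, Finset.sum_mul, Finset.mul_sum]
  try exact Finset.sum_congr rfl fun _ _ => Finset.sum_congr rfl fun _ _ =>
    Finset.sum_congr rfl fun _ _ => Finset.sum_congr rfl fun _ _ => by ring

lemma case3 (d : ℕ) (X Y : Matrix (Fin d) (Fin d) ℂ) :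
    (∑ f : Fin 4 → Fin d, tens4 X X Y Y f (f ∘ pp4 ![0,1,3,2] ![0,1,3,2]))
      = w1 X * w1 X * w2 Y Y := by
  rw [show (∑ f : Fin 4 → Fin d, tens4 X X Y Y f (f ∘ pp4 ![0,1,3,2] ![0,1,3,2]))
      = ∑ a, ∑ b, ∑ c, ∑ e, X a a * X b b * Y c e * Y e c from sum4 (fun a b c e => X a a * X b b * Y c e * Y e c)]
  conv_lhs => enter [2, a]; rw [Finset.sum_comm]
  conv_lhs => rw [Finset.sum_comm]
  conv_lhs => enter [2, a, 2, b]; rw [Finset.sum_comm]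
  conv_lhs => enter [2, a]; rw [Finset.sum_comm]
  conv_lhs => enter [2, a, 2, b]; rw [Finset.sum_comm]
  simp only [w1, w2, w3, w4, Finset.sum_mul, Finset.mul_sum]
  try exact Finset.sum_congr rfl fun _ _ => Finset.sum_congr rfl fun _ _ =>
    Finset.sum_congr rfl fun _ _ => Finset.sum_congr rfl fun _ _ => by ring

lemma case4 (d : ℕ) (X Y : Matrix (Fin d) (Fin d) ℂ) :
    (∑ f : Fin 4 → Fin d, tens4 X X Y Y f (f ∘ pp4 ![2,1,0,3] ![2,1,0,3]))
      = w2 X Y * w1 X * w1 Y := by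
  rw [show (∑ f : Fin 4 → Fin d, tens4 X X Y Y f (f ∘ pp4 ![2,1,0,3] ![2,1,0,3]))
      = ∑ a, ∑ b, ∑ c, ∑ e, X a c * X b b * Y c a * Y e e from sum4 (fun a b c e => X a c * X b b * Y c a * Y e e)]
  conv_lhs => enter [2, a, 2, b]; rw [Finset.sum_comm]
  conv_lhs => enter [2, a]; rw [Finset.sum_comm]
  conv_lhs => rw [Finset.sum_comm]
  conv_lhs => enter [2, a]; rw [Finset.sum_comm]
  simp only [w1, w2, w3, w4, Finset.sum_mul, Finset.mul_sum]
  try exact Finset.sum_congr rfl fun _ _ => Finset.sum_congr rfl fun _ _ =>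
    Finset.sum_congr rfl fun _ _ => Finset.sum_congr rfl fun _ _ => by ring

lemma case5 (d : ℕ) (X Y : Matrix (Fin d) (Fin d) ℂ) :
    (∑ f : Fin 4 → Fin d, tens4 X X Y Y f (f ∘ pp4 ![3,1,2,0] ![3,1,2,0]))
      = w2 X Y * w1 X * w1 Y := by
  rw [show (∑ f : Fin 4 → Fin d, tens4 X X Y Y f (f ∘ pp4 ![3,1,2,0] ![3,1,2,0]))
      = ∑ a, ∑ b, ∑ c, ∑ e, X a e * X b b * Y c c * Y e a from sum4 (fun a b c e => X a e * X b b * Y c c * Y e a)]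
  conv_lhs => enter [2, a]; rw [Finset.sum_comm]
  conv_lhs => rw [Finset.sum_comm]
  conv_lhs => enter [2, a]; rw [Finset.sum_comm]
  simp only [w1, w2, w3, w4, Finset.sum_mul, Finset.mul_sum]
  try exact Finset.sum_congr rfl fun _ _ => Finset.sum_congr rfl fun _ _ =>
    Finset.sum_congr rfl fun _ _ => Finset.sum_congr rfl fun _ _ => by ring

lemma case6 (d : ℕ) (X Y : Matrix (Fin d) (Fin d) ℂ) :
    (∑ f : Fin 4 → Fin d, tens4 X X Y Y f (f ∘ pp4 ![0,2,1,3] ![0,2,1,3]))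
      = w2 X Y * w1 X * w1 Y := by
  rw [show (∑ f : Fin 4 → Fin d, tens4 X X Y Y f (f ∘ pp4 ![0,2,1,3] ![0,2,1,3]))
      = ∑ a, ∑ b, ∑ c, ∑ e, X a a * X b c * Y c b * Y e e from sum4 (fun a b c e => X a a * X b c * Y c b * Y e e)]
  conv_lhs => enter [2, a, 2, b]; rw [Finset.sum_comm]
  conv_lhs => enter [2, a]; rw [Finset.sum_comm]
  conv_lhs => rw [Finset.sum_comm]
  simp only [w1, w2, w3, w4, Finset.sum_mul, Finset.mul_sum]
  try exact Finset.sum_congr rfl fun _ _ => Finset.sum_congr rfl fun _ _ =>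
    Finset.sum_congr rfl fun _ _ => Finset.sum_congr rfl fun _ _ => by ring

lemma case7 (d : ℕ) (X Y : Matrix (Fin d) (Fin d) ℂ) :
    (∑ f : Fin 4 → Fin d, tens4 X X Y Y f (f ∘ pp4 ![0,3,2,1] ![0,3,2,1]))
      = w2 X Y * w1 X * w1 Y := by
  rw [show (∑ f : Fin 4 → Fin d, tens4 X X Y Y f (f ∘ pp4 ![0,3,2,1] ![0,3,2,1]))
      = ∑ a, ∑ b, ∑ c, ∑ e, X a a * X b e * Y c c * Y e b from sum4 (fun a b c e => X a a * X b e * Y c c * Y e b)]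
  conv_lhs => enter [2, a]; rw [Finset.sum_comm]
  conv_lhs => rw [Finset.sum_comm]
  simp only [w1, w2, w3, w4, Finset.sum_mul, Finset.mul_sum]
  try exact Finset.sum_congr rfl fun _ _ => Finset.sum_congr rfl fun _ _ =>
    Finset.sum_congr rfl fun _ _ => Finset.sum_congr rfl fun _ _ => by ring

lemma case8 (d : ℕ) (X Y : Matrix (Fin d) (Fin d) ℂ) :
    (∑ f : Fin 4 → Fin d, tens4 X X Y Y f (f ∘ pp4 ![1,0,3,2] ![1,0,3,2]))
      = w2 X X * w2 Y Y := by
  rw [show (∑ f : Fin 4 → Fin d, tens4 X X Y Y f (f ∘ pp4 ![1,0,3,2] ![1,0,3,2]))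
      = ∑ a, ∑ b, ∑ c, ∑ e, X a b * X b a * Y c e * Y e c from sum4 (fun a b c e => X a b * X b a * Y c e * Y e c)]
  conv_lhs => enter [2, a]; rw [Finset.sum_comm]
  conv_lhs => rw [Finset.sum_comm]
  conv_lhs => enter [2, a, 2, b]; rw [Finset.sum_comm]
  conv_lhs => enter [2, a]; rw [Finset.sum_comm]
  simp only [w1, w2, w3, w4, Finset.sum_mul, Finset.mul_sum]
  try exact Finset.sum_congr rfl fun _ _ => Finset.sum_congr rfl fun _ _ =>
    Finset.sum_congr rfl fun _ _ => Finset.sum_congr rfl fun _ _ => by ring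

lemma case9 (d : ℕ) (X Y : Matrix (Fin d) (Fin d) ℂ) :
    (∑ f : Fin 4 → Fin d, tens4 X X Y Y f (f ∘ pp4 ![2,3,0,1] ![2,3,0,1]))
      = w2 X Y * w2 X Y := by
  rw [show (∑ f : Fin 4 → Fin d, tens4 X X Y Y f (f ∘ pp4 ![2,3,0,1] ![2,3,0,1]))
      = ∑ a, ∑ b, ∑ c, ∑ e, X a c * X b e * Y c a * Y e b from sum4 (fun a b c e => X a c * X b e * Y c a * Y e b)]
  conv_lhs => rw [Finset.sum_comm]
  conv_lhs => enter [2, a, 2, b]; rw [Finset.sum_comm]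
  conv_lhs => enter [2, a]; rw [Finset.sum_comm]
  simp only [w1, w2, w3, w4, Finset.sum_mul, Finset.mul_sum]
  try exact Finset.sum_congr rfl fun _ _ => Finset.sum_congr rfl fun _ _ =>
    Finset.sum_congr rfl fun _ _ => Finset.sum_congr rfl fun _ _ => by ring

lemma case10 (d : ℕ) (X Y : Matrix (Fin d) (Fin d) ℂ) :
    (∑ f : Fin 4 → Fin d, tens4 X X Y Y f (f ∘ pp4 ![3,2,1,0] ![3,2,1,0]))
      = w2 X Y * w2 X Y := by
  rw [show (∑ f : Fin 4 → Fin d, tens4 X X Y Y f (f ∘ pp4 ![3,2,1,0] ![3,2,1,0]))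
      = ∑ a, ∑ b, ∑ c, ∑ e, X a e * X b c * Y c b * Y e a from sum4 (fun a b c e => X a e * X b c * Y c b * Y e a)]
  conv_lhs => rw [Finset.sum_comm]
  conv_lhs => enter [2, a]; rw [Finset.sum_comm]
  simp only [w1, w2, w3, w4, Finset.sum_mul, Finset.mul_sum]
  try exact Finset.sum_congr rfl fun _ _ => Finset.sum_congr rfl fun _ _ =>
    Finset.sum_congr rfl fun _ _ => Finset.sum_congr rfl fun _ _ => by ring

lemma case11 (d : ℕ) (X Y : Matrix (Fin d) (Fin d) ℂ) :
    (∑ f : Fin 4 → Fin d, tens4 X X Y Y f (f ∘ pp4 ![1,2,0,3] ![2,0,1,3]))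
      = w3 X X Y * w1 Y := by
  rw [show (∑ f : Fin 4 → Fin d, tens4 X X Y Y f (f ∘ pp4 ![1,2,0,3] ![2,0,1,3]))
      = ∑ a, ∑ b, ∑ c, ∑ e, X a b * X b c * Y c a * Y e e from sum4 (fun a b c e => X a b * X b c * Y c a * Y e e)]
  conv_lhs => enter [2, a, 2, b]; rw [Finset.sum_comm]
  conv_lhs => enter [2, a]; rw [Finset.sum_comm]
  conv_lhs => rw [Finset.sum_comm]
  simp only [w1, w2, w3, w4, Finset.sum_mul, Finset.mul_sum]
  try exact Finset.sum_congr rfl fun _ _ => Finset.sum_congr rfl fun _ _ =>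
    Finset.sum_congr rfl fun _ _ => Finset.sum_congr rfl fun _ _ => by ring

lemma case12 (d : ℕ) (X Y : Matrix (Fin d) (Fin d) ℂ) :
    (∑ f : Fin 4 → Fin d, tens4 X X Y Y f (f ∘ pp4 ![2,0,1,3] ![1,2,0,3]))
      = w3 X X Y * w1 Y := by
  rw [show (∑ f : Fin 4 → Fin d, tens4 X X Y Y f (f ∘ pp4 ![2,0,1,3] ![1,2,0,3]))
      = ∑ a, ∑ b, ∑ c, ∑ e, X a c * X b a * Y c b * Y e e from sum4 (fun a b c e => X a c * X b a * Y c b * Y e e)]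
  conv_lhs => enter [2, a, 2, b]; rw [Finset.sum_comm]
  conv_lhs => enter [2, a]; rw [Finset.sum_comm]
  conv_lhs => rw [Finset.sum_comm]
  conv_lhs => enter [2, a]; rw [Finset.sum_comm]
  simp only [w1, w2, w3, w4, Finset.sum_mul, Finset.mul_sum]
  try exact Finset.sum_congr rfl fun _ _ => Finset.sum_congr rfl fun _ _ =>
    Finset.sum_congr rfl fun _ _ => Finset.sum_congr rfl fun _ _ => by ring

lemma case13 (d : ℕ) (X Y : Matrix (Fin d) (Fin d) ℂ) :
    (∑ f : Fin 4 → Fin d, tens4 X X Y Y f (f ∘ pp4 ![1,3,2,0] ![3,0,2,1]))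
      = w3 X X Y * w1 Y := by
  rw [show (∑ f : Fin 4 → Fin d, tens4 X X Y Y f (f ∘ pp4 ![1,3,2,0] ![3,0,2,1]))
      = ∑ a, ∑ b, ∑ c, ∑ e, X a b * X b e * Y c c * Y e a from sum4 (fun a b c e => X a b * X b e * Y c c * Y e a)]
  conv_lhs => enter [2, a]; rw [Finset.sum_comm]
  conv_lhs => rw [Finset.sum_comm]
  simp only [w1, w2, w3, w4, Finset.sum_mul, Finset.mul_sum]
  try exact Finset.sum_congr rfl fun _ _ => Finset.sum_congr rfl fun _ _ =>
    Finset.sum_congr rfl fun _ _ => Finset.sum_congr rfl fun _ _ => by ring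

lemma case14 (d : ℕ) (X Y : Matrix (Fin d) (Fin d) ℂ) :
    (∑ f : Fin 4 → Fin d, tens4 X X Y Y f (f ∘ pp4 ![3,0,2,1] ![1,3,2,0]))
      = w3 X X Y * w1 Y := by
  rw [show (∑ f : Fin 4 → Fin d, tens4 X X Y Y f (f ∘ pp4 ![3,0,2,1] ![1,3,2,0]))
      = ∑ a, ∑ b, ∑ c, ∑ e, X a e * X b a * Y c c * Y e b from sum4 (fun a b c e => X a e * X b a * Y c c * Y e b)]
  conv_lhs => enter [2, a]; rw [Finset.sum_comm]
  conv_lhs => rw [Finset.sum_comm]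
  conv_lhs => enter [2, a]; rw [Finset.sum_comm]
  simp only [w1, w2, w3, w4, Finset.sum_mul, Finset.mul_sum]
  try exact Finset.sum_congr rfl fun _ _ => Finset.sum_congr rfl fun _ _ =>
    Finset.sum_congr rfl fun _ _ => Finset.sum_congr rfl fun _ _ => by ring

lemma case15 (d : ℕ) (X Y : Matrix (Fin d) (Fin d) ℂ) :
    (∑ f : Fin 4 → Fin d, tens4 X X Y Y f (f ∘ pp4 ![2,1,3,0] ![3,1,0,2]))
      = w3 X Y Y * w1 X := by
  rw [show (∑ f : Fin 4 → Fin d, tens4 X X Y Y f (f ∘ pp4 ![2,1,3,0] ![3,1,0,2]))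
      = ∑ a, ∑ b, ∑ c, ∑ e, X a c * X b b * Y c e * Y e a from sum4 (fun a b c e => X a c * X b b * Y c e * Y e a)]
  conv_lhs => rw [Finset.sum_comm]
  simp only [w1, w2, w3, w4, Finset.sum_mul, Finset.mul_sum]
  try exact Finset.sum_congr rfl fun _ _ => Finset.sum_congr rfl fun _ _ =>
    Finset.sum_congr rfl fun _ _ => Finset.sum_congr rfl fun _ _ => by ring

lemma case16 (d : ℕ) (X Y : Matrix (Fin d) (Fin d) ℂ) :
    (∑ f : Fin 4 → Fin d, tens4 X X Y Y f (f ∘ pp4 ![3,1,0,2] ![2,1,3,0]))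
      = w3 X Y Y * w1 X := by
  rw [show (∑ f : Fin 4 → Fin d, tens4 X X Y Y f (f ∘ pp4 ![3,1,0,2] ![2,1,3,0]))
      = ∑ a, ∑ b, ∑ c, ∑ e, X a e * X b b * Y c a * Y e c from sum4 (fun a b c e => X a e * X b b * Y c a * Y e c)]
  conv_lhs => rw [Finset.sum_comm]
  conv_lhs => enter [2, a, 2, b]; rw [Finset.sum_comm]
  simp only [w1, w2, w3, w4, Finset.sum_mul, Finset.mul_sum]
  try exact Finset.sum_congr rfl fun _ _ => Finset.sum_congr rfl fun _ _ =>
    Finset.sum_congr rfl fun _ _ => Finset.sum_congr rfl fun _ _ => by ring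

lemma case17 (d : ℕ) (X Y : Matrix (Fin d) (Fin d) ℂ) :
    (∑ f : Fin 4 → Fin d, tens4 X X Y Y f (f ∘ pp4 ![0,2,3,1] ![0,3,1,2]))
      = w3 X Y Y * w1 X := by
  rw [show (∑ f : Fin 4 → Fin d, tens4 X X Y Y f (f ∘ pp4 ![0,2,3,1] ![0,3,1,2]))
      = ∑ a, ∑ b, ∑ c, ∑ e, X a a * X b c * Y c e * Y e b from sum4 (fun a b c e => X a a * X b c * Y c e * Y e b)]
  simp only [w1, w2, w3, w4, Finset.sum_mul, Finset.mul_sum]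
  try exact Finset.sum_congr rfl fun _ _ => Finset.sum_congr rfl fun _ _ =>
    Finset.sum_congr rfl fun _ _ => Finset.sum_congr rfl fun _ _ => by ring

lemma case18 (d : ℕ) (X Y : Matrix (Fin d) (Fin d) ℂ) :
    (∑ f : Fin 4 → Fin d, tens4 X X Y Y f (f ∘ pp4 ![0,3,1,2] ![0,2,3,1]))
      = w3 X Y Y * w1 X := by
  rw [show (∑ f : Fin 4 → Fin d, tens4 X X Y Y f (f ∘ pp4 ![0,3,1,2] ![0,2,3,1]))
      = ∑ a, ∑ b, ∑ c, ∑ e, X a a * X b e * Y c b * Y e c from sum4 (fun a b c e => X a a * X b e * Y c b * Y e c)]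
  conv_lhs => enter [2, a, 2, b]; rw [Finset.sum_comm]
  simp only [w1, w2, w3, w4, Finset.sum_mul, Finset.mul_sum]
  try exact Finset.sum_congr rfl fun _ _ => Finset.sum_congr rfl fun _ _ =>
    Finset.sum_congr rfl fun _ _ => Finset.sum_congr rfl fun _ _ => by ring

lemma case19 (d : ℕ) (X Y : Matrix (Fin d) (Fin d) ℂ) :
    (∑ f : Fin 4 → Fin d, tens4 X X Y Y f (f ∘ pp4 ![1,2,3,0] ![3,0,1,2]))
      = w4 X X Y Y := by
  rw [show (∑ f : Fin 4 → Fin d, tens4 X X Y Y f (f ∘ pp4 ![1,2,3,0] ![3,0,1,2]))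
      = ∑ a, ∑ b, ∑ c, ∑ e, X a b * X b c * Y c e * Y e a from sum4 (fun a b c e => X a b * X b c * Y c e * Y e a)]
  simp only [w1, w2, w3, w4, Finset.sum_mul, Finset.mul_sum]
  try exact Finset.sum_congr rfl fun _ _ => Finset.sum_congr rfl fun _ _ =>
    Finset.sum_congr rfl fun _ _ => Finset.sum_congr rfl fun _ _ => by ring

lemma case20 (d : ℕ) (X Y : Matrix (Fin d) (Fin d) ℂ) :
    (∑ f : Fin 4 → Fin d, tens4 X X Y Y f (f ∘ pp4 ![1,3,0,2] ![2,0,3,1]))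
      = w4 X X Y Y := by
  rw [show (∑ f : Fin 4 → Fin d, tens4 X X Y Y f (f ∘ pp4 ![1,3,0,2] ![2,0,3,1]))
      = ∑ a, ∑ b, ∑ c, ∑ e, X a b * X b e * Y c a * Y e c from sum4 (fun a b c e => X a b * X b e * Y c a * Y e c)]
  conv_lhs => enter [2, a, 2, b]; rw [Finset.sum_comm]
  simp only [w1, w2, w3, w4, Finset.sum_mul, Finset.mul_sum]
  try exact Finset.sum_congr rfl fun _ _ => Finset.sum_congr rfl fun _ _ =>
    Finset.sum_congr rfl fun _ _ => Finset.sum_congr rfl fun _ _ => by ring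

lemma case21 (d : ℕ) (X Y : Matrix (Fin d) (Fin d) ℂ) :
    (∑ f : Fin 4 → Fin d, tens4 X X Y Y f (f ∘ pp4 ![2,3,1,0] ![3,2,0,1]))
      = w4 X Y X Y := by
  rw [show (∑ f : Fin 4 → Fin d, tens4 X X Y Y f (f ∘ pp4 ![2,3,1,0] ![3,2,0,1]))
      = ∑ a, ∑ b, ∑ c, ∑ e, X a c * X b e * Y c b * Y e a from sum4 (fun a b c e => X a c * X b e * Y c b * Y e a)]
  conv_lhs => enter [2, a]; rw [Finset.sum_comm]
  simp only [w1, w2, w3, w4, Finset.sum_mul, Finset.mul_sum]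
  try exact Finset.sum_congr rfl fun _ _ => Finset.sum_congr rfl fun _ _ =>
    Finset.sum_congr rfl fun _ _ => Finset.sum_congr rfl fun _ _ => by ring

lemma case22 (d : ℕ) (X Y : Matrix (Fin d) (Fin d) ℂ) :
    (∑ f : Fin 4 → Fin d, tens4 X X Y Y f (f ∘ pp4 ![2,0,3,1] ![1,3,0,2]))
      = w4 X X Y Y := by
  rw [show (∑ f : Fin 4 → Fin d, tens4 X X Y Y f (f ∘ pp4 ![2,0,3,1] ![1,3,0,2]))
      = ∑ a, ∑ b, ∑ c, ∑ e, X a c * X b a * Y c e * Y e b from sum4 (fun a b c e => X a c * X b a * Y c e * Y e b)]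
  conv_lhs => rw [Finset.sum_comm]
  simp only [w1, w2, w3, w4, Finset.sum_mul, Finset.mul_sum]
  try exact Finset.sum_congr rfl fun _ _ => Finset.sum_congr rfl fun _ _ =>
    Finset.sum_congr rfl fun _ _ => Finset.sum_congr rfl fun _ _ => by ring

lemma case23 (d : ℕ) (X Y : Matrix (Fin d) (Fin d) ℂ) :
    (∑ f : Fin 4 → Fin d, tens4 X X Y Y f (f ∘ pp4 ![3,2,0,1] ![2,3,1,0]))
      = w4 X Y X Y := by
  rw [show (∑ f : Fin 4 → Fin d, tens4 X X Y Y f (f ∘ pp4 ![3,2,0,1] ![2,3,1,0]))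
      = ∑ a, ∑ b, ∑ c, ∑ e, X a e * X b c * Y c a * Y e b from sum4 (fun a b c e => X a e * X b c * Y c a * Y e b)]
  conv_lhs => enter [2, a, 2, b]; rw [Finset.sum_comm]
  conv_lhs => enter [2, a]; rw [Finset.sum_comm]
  simp only [w1, w2, w3, w4, Finset.sum_mul, Finset.mul_sum]
  try exact Finset.sum_congr rfl fun _ _ => Finset.sum_congr rfl fun _ _ =>
    Finset.sum_congr rfl fun _ _ => Finset.sum_congr rfl fun _ _ => by ring

lemma case24 (d : ℕ) (X Y : Matrix (Fin d) (Fin d) ℂ) :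
    (∑ f : Fin 4 → Fin d, tens4 X X Y Y f (f ∘ pp4 ![3,0,1,2] ![1,2,3,0]))
      = w4 X X Y Y := by
  rw [show (∑ f : Fin 4 → Fin d, tens4 X X Y Y f (f ∘ pp4 ![3,0,1,2] ![1,2,3,0]))
      = ∑ a, ∑ b, ∑ c, ∑ e, X a e * X b a * Y c b * Y e c from sum4 (fun a b c e => X a e * X b a * Y c b * Y e c)]
  conv_lhs => rw [Finset.sum_comm]
  conv_lhs => enter [2, a, 2, b]; rw [Finset.sum_comm]
  simp only [w1, w2, w3, w4, Finset.sum_mul, Finset.mul_sum]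
  try exact Finset.sum_congr rfl fun _ _ => Finset.sum_congr rfl fun _ _ =>
    Finset.sum_congr rfl fun _ _ => Finset.sum_congr rfl fun _ _ => by ring

lemma case2a (d : ℕ) (X : Matrix (Fin d) (Fin d) ℂ) :
    (∑ f : Fin 2 → Fin d, tens2 X X f (f ∘ pp2 ![0,1] ![0,1])) = w1 X * w1 X := by
  rw [show (∑ f : Fin 2 → Fin d, tens2 X X f (f ∘ pp2 ![0,1] ![0,1]))
      = ∑ a, ∑ b, X a a * X b b from sum2 (fun a b => X a a * X b b)]
  conv_lhs => rw [Finset.sum_comm]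
  simp only [w1, Finset.sum_mul, Finset.mul_sum]
  try exact Finset.sum_congr rfl fun _ _ => Finset.sum_congr rfl fun _ _ => by ring

lemma case2b (d : ℕ) (X : Matrix (Fin d) (Fin d) ℂ) :
    (∑ f : Fin 2 → Fin d, tens2 X X f (f ∘ pp2 ![1,0] ![1,0])) = w2 X X := by
  rw [show (∑ f : Fin 2 → Fin d, tens2 X X f (f ∘ pp2 ![1,0] ![1,0]))
      = ∑ a, ∑ b, X a b * X b a from sum2 (fun a b => X a b * X b a)]
  rfl

lemma trace2_eq (d : ℕ) (X : Matrix (Fin d) (Fin d) ℂ) :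
    Matrix.trace (tens2 X X * psym d 2) = (2:ℂ)⁻¹ * (w1 X * w1 X + w2 X X) := by
  rw [trace_mul_psym, s2enum, Finset.sum_insert (by decide), Finset.sum_singleton,
    case2a, case2b]
  norm_num [Nat.factorial]

lemma trace4_eq (d : ℕ) (X Y : Matrix (Fin d) (Fin d) ℂ) :
    Matrix.trace (tens4 X X Y Y * psym d 4) = (24:ℂ)⁻¹ *
      (w1 X * w1 X * w1 Y * w1 Y + w2 X X * w1 Y * w1 Y + w1 X * w1 X * w2 Y Y
        + 4 * (w2 X Y * w1 X * w1 Y) + w2 X X * w2 Y Y + 2 * (w2 X Y * w2 X Y)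
        + 4 * (w3 X X Y * w1 Y) + 4 * (w3 X Y Y * w1 X)
        + 4 * w4 X X Y Y + 2 * w4 X Y X Y) := by
  rw [trace_mul_psym, s4enum]
  repeat rw [Finset.sum_insert (by decide)]
  rw [Finset.sum_singleton]
  rw [case1, case2, case3, case4, case5, case6, case7, case8, case9, case10, case11,
    case12, case13, case14, case15, case16, case17, case18, case19, case20, case21,
    case22, case23, case24]
  norm_num [Nat.factorial]
  ring
lemma entry_star {d : ℕ} {X : Matrix (Fin d) (Fin d) ℂ} (hX : X.IsHermitian) (i j : Fin d) :
    star (X i j) = X j i := by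
  rw [← Matrix.conjTranspose_apply, hX]

lemma real_w1 {d : ℕ} {X : Matrix (Fin d) (Fin d) ℂ} (hX : X.IsHermitian) :
    (((w1 X).re : ℝ) : ℂ) = w1 X := by
  apply Complex.conj_eq_iff_re.mp
  simp only [w1, map_sum, starRingEnd_apply]
  exact Finset.sum_congr rfl fun i _ => entry_star hX i i

lemma real_w2 {d : ℕ} {X Y : Matrix (Fin d) (Fin d) ℂ} (hX : X.IsHermitian)
    (hY : Y.IsHermitian) : (((w2 X Y).re : ℝ) : ℂ) = w2 X Y := by
  apply Complex.conj_eq_iff_re.mp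
  simp only [w2, map_sum, starRingEnd_apply, star_mul', entry_star hX, entry_star hY]
  rw [Finset.sum_comm]

lemma real_w3 {d : ℕ} {X Y : Matrix (Fin d) (Fin d) ℂ} (hX : X.IsHermitian)
    (hY : Y.IsHermitian) : (((w3 X X Y).re : ℝ) : ℂ) = w3 X X Y := by
  apply Complex.conj_eq_iff_re.mp
  simp only [w3, map_sum, starRingEnd_apply, star_mul', entry_star hX, entry_star hY]
  -- goal : ∑ i, ∑ j, ∑ k, X j i * X k j * Y i k = ∑ i, ∑ j, ∑ k, X i j * X j k * Y k i
  -- reindex (i,j,k) ↦ (k,j,i)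
  conv_lhs => enter [2, i]; rw [Finset.sum_comm]
  conv_lhs => rw [Finset.sum_comm]
  conv_lhs => enter [2, i]; rw [Finset.sum_comm]
  exact Finset.sum_congr rfl fun _ _ => Finset.sum_congr rfl fun _ _ =>
    Finset.sum_congr rfl fun _ _ => by ring

lemma real_w4 {d : ℕ} {X Y : Matrix (Fin d) (Fin d) ℂ} (hX : X.IsHermitian)
    (hY : Y.IsHermitian) : (((w4 X X Y Y).re : ℝ) : ℂ) = w4 X X Y Y := by
  apply Complex.conj_eq_iff_re.mp
  simp only [w4, map_sum, starRingEnd_apply, star_mul', entry_star hX, entry_star hY]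
  -- goal : ∑ ijkl, X j i * X k j * Y l k * Y i l = ∑ ijkl, X i j * X j k * Y k l * Y l i
  -- summand S(i,j,k,l) = W4(k,j,i,l): reindex swap binders 1 and 3: S2, S1, S2
  conv_lhs => enter [2, a]; rw [Finset.sum_comm]
  conv_lhs => rw [Finset.sum_comm]
  conv_lhs => enter [2, a]; rw [Finset.sum_comm]
  try exact Finset.sum_congr rfl fun _ _ => Finset.sum_congr rfl fun _ _ =>
    Finset.sum_congr rfl fun _ _ => Finset.sum_congr rfl fun _ _ => by ring
noncomputable def entM {d : ℕ} (X Y : Matrix (Fin d) (Fin d) ℂ) (p : Fin d × Fin d) : ℂ :=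
  ∑ j, X p.1 j * Y j p.2

lemma re_sq_le_abs_sq (z : ℂ) : z.re ^ 2 ≤ ‖z‖ ^ 2 := by
  nlinarith [Complex.sq_norm z, Complex.normSq_apply z, sq_nonneg z.im]

lemma re_mul_le (z w : ℂ) : (z * w).re ≤ (‖z‖ ^ 2 + ‖w‖ ^ 2) / 2 := by
  have h1 : (z * w).re ≤ ‖z * w‖ := Complex.re_le_norm _
  rw [norm_mul] at h1
  nlinarith [sq_nonneg (‖z‖ - ‖w‖), norm_nonneg z,
    norm_nonneg w]

lemma w2_self {d : ℕ} {X : Matrix (Fin d) (Fin d) ℂ} (hX : X.IsHermitian) :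
    w2 X X = ((∑ i, ∑ j, ‖X i j‖ ^ 2 : ℝ) : ℂ) := by
  have h : ∀ i j, X i j * X j i = ((‖X i j‖ ^ 2 : ℝ) : ℂ) := fun i j => by
    rw [← entry_star hX i j, show (star (X i j)) = (starRingEnd ℂ) (X i j) from rfl,
      Complex.mul_conj, Complex.sq_norm]
  simp only [w2, h]
  push_cast
  rfl

lemma w2_self_re {d : ℕ} {X : Matrix (Fin d) (Fin d) ℂ} (hX : X.IsHermitian) :
    (w2 X X).re = ∑ i, ∑ j, ‖X i j‖ ^ 2 := by
  rw [w2_self hX, Complex.ofReal_re]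

lemma w2_self_nonneg {d : ℕ} {X : Matrix (Fin d) (Fin d) ℂ} (hX : X.IsHermitian) :
    0 ≤ (w2 X X).re := by
  rw [w2_self_re hX]; positivity

lemma w2_self_re_prod {d : ℕ} {X : Matrix (Fin d) (Fin d) ℂ} (hX : X.IsHermitian) :
    (w2 X X).re = ∑ p : Fin d × Fin d, ‖X p.1 p.2‖ ^ 2 :=
  (w2_self_re hX).trans
    (Fintype.sum_prod_type (fun p : Fin d × Fin d => ‖X p.1 p.2‖ ^ 2)).symm

lemma sum_prod_factor {d : ℕ} (R C : Fin d → ℝ) :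
    ∑ p : Fin d × Fin d, R p.1 * C p.2 = (∑ i, R i) * (∑ i, C i) :=
  (Fintype.sum_prod_type (fun p : Fin d × Fin d => R p.1 * C p.2)).trans
    (Finset.sum_mul_sum _ _ _ _).symm

lemma abs_entM_sq_le {d : ℕ} (X Y : Matrix (Fin d) (Fin d) ℂ) (p : Fin d × Fin d) :
    ‖entM X Y p‖ ^ 2
      ≤ (∑ j, ‖X p.1 j‖ ^ 2) * (∑ j, ‖Y j p.2‖ ^ 2) := by
  have h1 : ‖entM X Y p‖ ≤ ∑ j, ‖X p.1 j‖ * ‖Y j p.2‖ := by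
    refine le_trans (norm_sum_le _ _) (le_of_eq ?_)
    exact Finset.sum_congr rfl fun j _ => norm_mul _ _
  calc ‖entM X Y p‖ ^ 2
      ≤ (∑ j, ‖X p.1 j‖ * ‖Y j p.2‖) ^ 2 :=
        pow_le_pow_left₀ (norm_nonneg _) h1 2
    _ ≤ _ := Finset.sum_mul_sq_le_sq_mul_sq _ _ _

lemma sum_abs_entM_le {d : ℕ} {X Y : Matrix (Fin d) (Fin d) ℂ} (hX : X.IsHermitian)
    (hY : Y.IsHermitian) :
    ∑ p : Fin d × Fin d, ‖entM X Y p‖ ^ 2 ≤ (w2 X X).re * (w2 Y Y).re := by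
  refine le_trans (Finset.sum_le_sum fun p _ => abs_entM_sq_le X Y p) (le_of_eq ?_)
  rw [sum_prod_factor (fun i => ∑ j, ‖X i j‖ ^ 2)
    (fun k => ∑ j, ‖Y j k‖ ^ 2), w2_self_re hX, w2_self_re hY]
  congr 1
  exact Finset.sum_comm

lemma w2_cs {d : ℕ} {X Y : Matrix (Fin d) (Fin d) ℂ} (hX : X.IsHermitian)
    (hY : Y.IsHermitian) : (w2 X Y).re ^ 2 ≤ (w2 X X).re * (w2 Y Y).re := by
  have e : w2 X Y = ∑ p : Fin d × Fin d, X p.1 p.2 * Y p.2 p.1 :=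
    (Fintype.sum_prod_type (fun p : Fin d × Fin d => X p.1 p.2 * Y p.2 p.1)).symm
  have h1 : ‖w2 X Y‖
      ≤ ∑ p : Fin d × Fin d, ‖X p.1 p.2‖ * ‖Y p.1 p.2‖ := by
    rw [e]
    refine le_trans (norm_sum_le _ _) (Finset.sum_le_sum fun p _ => le_of_eq ?_)
    rw [norm_mul, ← entry_star hY p.1 p.2,
      show (star (Y p.1 p.2)) = (starRingEnd ℂ) (Y p.1 p.2) from rfl, Complex.norm_conj]
  calc (w2 X Y).re ^ 2 ≤ ‖w2 X Y‖ ^ 2 := re_sq_le_abs_sq _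
    _ ≤ (∑ p : Fin d × Fin d, ‖X p.1 p.2‖ * ‖Y p.1 p.2‖) ^ 2 :=
        pow_le_pow_left₀ (norm_nonneg _) h1 2
    _ ≤ (∑ p : Fin d × Fin d, ‖X p.1 p.2‖ ^ 2)
          * (∑ p : Fin d × Fin d, ‖Y p.1 p.2‖ ^ 2) :=
        Finset.sum_mul_sq_le_sq_mul_sq _ _ _
    _ = (w2 X X).re * (w2 Y Y).re := by rw [← w2_self_re_prod hX, ← w2_self_re_prod hY]
lemma congr4' {d : ℕ} {F G : Fin d → Fin d → Fin d → Fin d → ℂ}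
    (h : ∀ a b c e, F a b c e = G a b c e) :
    (∑ a, ∑ b, ∑ c, ∑ e, F a b c e) = ∑ a, ∑ b, ∑ c, ∑ e, G a b c e :=
  Finset.sum_congr rfl fun a _ => Finset.sum_congr rfl fun b _ =>
    Finset.sum_congr rfl fun c _ => Finset.sum_congr rfl fun e _ => h a b c e

lemma w3_groupXXY {d : ℕ} (X Y : Matrix (Fin d) (Fin d) ℂ) :
    w3 X X Y = ∑ p : Fin d × Fin d, entM X X p * Y p.2 p.1 := by
  have e : (∑ p : Fin d × Fin d, entM X X p * Y p.2 p.1)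
      = ∑ i, ∑ k, (∑ j, X i j * X j k) * Y k i :=
    Fintype.sum_prod_type (fun p : Fin d × Fin d => entM X X p * Y p.2 p.1)
  rw [e]
  simp only [w3, Finset.sum_mul]
  conv_lhs => enter [2, i]; rw [Finset.sum_comm]
  try exact Finset.sum_congr rfl fun _ _ => Finset.sum_congr rfl fun _ _ =>
    Finset.sum_congr rfl fun _ _ => by ring

lemma w3_groupXYY {d : ℕ} (X Y : Matrix (Fin d) (Fin d) ℂ) :
    w3 X Y Y = ∑ p : Fin d × Fin d, X p.1 p.2 * entM Y Y (p.2, p.1) := by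
  have e : (∑ p : Fin d × Fin d, X p.1 p.2 * entM Y Y (p.2, p.1))
      = ∑ i, ∑ j, X i j * (∑ k, Y j k * Y k i) :=
    Fintype.sum_prod_type (fun p : Fin d × Fin d => X p.1 p.2 * entM Y Y (p.2, p.1))
  rw [e]
  simp only [w3, Finset.mul_sum]
  exact Finset.sum_congr rfl fun _ _ => Finset.sum_congr rfl fun _ _ =>
    Finset.sum_congr rfl fun _ _ => by ring

lemma w4_groupP {d : ℕ} {X Y : Matrix (Fin d) (Fin d) ℂ} (hX : X.IsHermitian)
    (hY : Y.IsHermitian) :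
    w4 X X Y Y = ∑ p : Fin d × Fin d, entM X Y p * star (entM X Y p) := by
  have hstar : ∀ p : Fin d × Fin d, star (entM X Y p) = ∑ l, X l p.1 * Y p.2 l := by
    intro p
    simp only [entM, star_sum, star_mul', entry_star hX, entry_star hY]
  have e : (∑ p : Fin d × Fin d, entM X Y p * star (entM X Y p))
      = ∑ i, ∑ k, (∑ j, X i j * Y j k) * (∑ l, X l i * Y k l) := by
    simp only [hstar]
    exact Fintype.sum_prod_type (fun p : Fin d × Fin d => entM X Y p * ∑ l, X l p.1 * Y p.2 l)
  rw [e]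
  simp only [entM, w4, Finset.sum_mul, Finset.mul_sum]
  conv_lhs => rw [Finset.sum_comm]
  conv_lhs => enter [2, a, 2, b]; rw [Finset.sum_comm]
  conv_lhs => enter [2, a]; rw [Finset.sum_comm]
  exact congr4' fun a b c e => by ring

lemma w4_groupQ {d : ℕ} (X Y : Matrix (Fin d) (Fin d) ℂ) :
    w4 X Y X Y = ∑ p : Fin d × Fin d, entM X Y p * entM X Y (p.2, p.1) := by
  have e : (∑ p : Fin d × Fin d, entM X Y p * entM X Y (p.2, p.1))
      = ∑ i, ∑ k, (∑ j, X i j * Y j k) * (∑ l, X k l * Y l i) :=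
    Fintype.sum_prod_type (fun p : Fin d × Fin d => entM X Y p * entM X Y (p.2, p.1))
  rw [e]
  simp only [w4, Finset.sum_mul, Finset.mul_sum]
  conv_lhs => enter [2, a]; rw [Finset.sum_comm]
  conv_lhs => enter [2, a, 2, b]; rw [Finset.sum_comm]
  exact congr4' fun a b c e => by ring

lemma w4P_repr {d : ℕ} {X Y : Matrix (Fin d) (Fin d) ℂ} (hX : X.IsHermitian)
    (hY : Y.IsHermitian) :
    w4 X X Y Y = ((∑ p : Fin d × Fin d, ‖entM X Y p‖ ^ 2 : ℝ) : ℂ) := by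
  rw [w4_groupP hX hY]
  have h : ∀ p : Fin d × Fin d, entM X Y p * star (entM X Y p)
      = ((‖entM X Y p‖ ^ 2 : ℝ) : ℂ) := fun p => by
    rw [show (star (entM X Y p)) = (starRingEnd ℂ) (entM X Y p) from rfl,
      Complex.mul_conj, Complex.sq_norm]
  simp only [h]
  push_cast
  rfl

lemma w4P_re {d : ℕ} {X Y : Matrix (Fin d) (Fin d) ℂ} (hX : X.IsHermitian)
    (hY : Y.IsHermitian) :
    (w4 X X Y Y).re = ∑ p : Fin d × Fin d, ‖entM X Y p‖ ^ 2 := by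
  rw [w4P_repr hX hY, Complex.ofReal_re]

lemma w4P_nonneg {d : ℕ} {X Y : Matrix (Fin d) (Fin d) ℂ} (hX : X.IsHermitian)
    (hY : Y.IsHermitian) : 0 ≤ (w4 X X Y Y).re := by
  rw [w4P_re hX hY]; positivity

lemma w4P_le {d : ℕ} {X Y : Matrix (Fin d) (Fin d) ℂ} (hX : X.IsHermitian)
    (hY : Y.IsHermitian) : (w4 X X Y Y).re ≤ (w2 X X).re * (w2 Y Y).re := by
  rw [w4P_re hX hY]
  exact sum_abs_entM_le hX hY

lemma swap_sum_abs {d : ℕ} (X Y : Matrix (Fin d) (Fin d) ℂ) :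
    ∑ p : Fin d × Fin d, ‖entM X Y (p.2, p.1)‖ ^ 2
      = ∑ p : Fin d × Fin d, ‖entM X Y p‖ ^ 2 :=
  Fintype.sum_equiv (Equiv.prodComm _ _)
    (fun p => ‖entM X Y (p.2, p.1)‖ ^ 2)
    (fun p => ‖entM X Y p‖ ^ 2) (fun p => rfl)

lemma w4Q_le {d : ℕ} {X Y : Matrix (Fin d) (Fin d) ℂ} (hX : X.IsHermitian)
    (hY : Y.IsHermitian) : (w4 X Y X Y).re ≤ (w4 X X Y Y).re := by
  rw [w4_groupQ X Y, Complex.re_sum, w4P_re hX hY]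
  have step : ∀ p : Fin d × Fin d, (entM X Y p * entM X Y (p.2, p.1)).re
      ≤ (‖entM X Y p‖ ^ 2 + ‖entM X Y (p.2, p.1)‖ ^ 2) / 2 :=
    fun p => re_mul_le _ _
  refine le_trans (Finset.sum_le_sum fun p _ => step p) (le_of_eq ?_)
  rw [← Finset.sum_div]
  rw [show (∑ p : Fin d × Fin d,
      (‖entM X Y p‖ ^ 2 + ‖entM X Y (p.2, p.1)‖ ^ 2))
    = (∑ p : Fin d × Fin d, ‖entM X Y p‖ ^ 2)
      + ∑ p : Fin d × Fin d, ‖entM X Y (p.2, p.1)‖ ^ 2 from Finset.sum_add_distrib]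
  rw [swap_sum_abs]
  ring

lemma w3XXY_bound {d : ℕ} {X Y : Matrix (Fin d) (Fin d) ℂ} (hX : X.IsHermitian)
    (hY : Y.IsHermitian) :
    (w3 X X Y).re ^ 2 ≤ ((w2 X X).re * (w2 X X).re) * (w2 Y Y).re := by
  have h1 : ‖w3 X X Y‖
      ≤ ∑ p : Fin d × Fin d, ‖entM X X p‖ * ‖Y p.1 p.2‖ := by
    rw [w3_groupXXY X Y]
    refine le_trans (norm_sum_le _ _) (Finset.sum_le_sum fun p _ => le_of_eq ?_)
    rw [norm_mul, ← entry_star hY p.1 p.2,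
      show (star (Y p.1 p.2)) = (starRingEnd ℂ) (Y p.1 p.2) from rfl, Complex.norm_conj]
  have h2 : ∑ p : Fin d × Fin d, ‖entM X X p‖ ^ 2
      ≤ (w2 X X).re * (w2 X X).re := sum_abs_entM_le hX hX
  have h3 : (0:ℝ) ≤ ∑ p : Fin d × Fin d, ‖Y p.1 p.2‖ ^ 2 := by positivity
  calc (w3 X X Y).re ^ 2 ≤ ‖w3 X X Y‖ ^ 2 := re_sq_le_abs_sq _
    _ ≤ (∑ p : Fin d × Fin d, ‖entM X X p‖ * ‖Y p.1 p.2‖) ^ 2 :=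
        pow_le_pow_left₀ (norm_nonneg _) h1 2
    _ ≤ (∑ p : Fin d × Fin d, ‖entM X X p‖ ^ 2)
          * (∑ p : Fin d × Fin d, ‖Y p.1 p.2‖ ^ 2) :=
        Finset.sum_mul_sq_le_sq_mul_sq _ _ _
    _ ≤ ((w2 X X).re * (w2 X X).re) * (∑ p : Fin d × Fin d, ‖Y p.1 p.2‖ ^ 2) :=
        mul_le_mul_of_nonneg_right h2 h3
    _ = ((w2 X X).re * (w2 X X).re) * (w2 Y Y).re := by rw [← w2_self_re_prod hY]

lemma w3XYY_bound {d : ℕ} {X Y : Matrix (Fin d) (Fin d) ℂ} (hX : X.IsHermitian)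
    (hY : Y.IsHermitian) :
    (w3 X Y Y).re ^ 2 ≤ (w2 X X).re * ((w2 Y Y).re * (w2 Y Y).re) := by
  have h1 : ‖w3 X Y Y‖
      ≤ ∑ p : Fin d × Fin d, ‖X p.1 p.2‖ * ‖entM Y Y (p.2, p.1)‖ := by
    rw [w3_groupXYY X Y]
    refine le_trans (norm_sum_le _ _) (Finset.sum_le_sum fun p _ => le_of_eq ?_)
    rw [norm_mul]
  have h2 : ∑ p : Fin d × Fin d, ‖entM Y Y (p.2, p.1)‖ ^ 2
      ≤ (w2 Y Y).re * (w2 Y Y).re := by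
    rw [swap_sum_abs Y Y]
    exact sum_abs_entM_le hY hY
  have h3 : (0:ℝ) ≤ ∑ p : Fin d × Fin d, ‖X p.1 p.2‖ ^ 2 := by positivity
  calc (w3 X Y Y).re ^ 2 ≤ ‖w3 X Y Y‖ ^ 2 := re_sq_le_abs_sq _
    _ ≤ (∑ p : Fin d × Fin d, ‖X p.1 p.2‖ * ‖entM Y Y (p.2, p.1)‖) ^ 2 :=
        pow_le_pow_left₀ (norm_nonneg _) h1 2
    _ ≤ (∑ p : Fin d × Fin d, ‖X p.1 p.2‖ ^ 2)
          * (∑ p : Fin d × Fin d, ‖entM Y Y (p.2, p.1)‖ ^ 2) :=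
        Finset.sum_mul_sq_le_sq_mul_sq _ _ _
    _ ≤ (∑ p : Fin d × Fin d, ‖X p.1 p.2‖ ^ 2)
          * ((w2 Y Y).re * (w2 Y Y).re) := mul_le_mul_of_nonneg_left h2 h3
    _ = (w2 X X).re * ((w2 Y Y).re * (w2 Y Y).re) := by rw [← w2_self_re_prod hX]
lemma real_w3' {d : ℕ} {X Y : Matrix (Fin d) (Fin d) ℂ} (hX : X.IsHermitian)
    (hY : Y.IsHermitian) : (((w3 X Y Y).re : ℝ) : ℂ) = w3 X Y Y := by
  apply Complex.conj_eq_iff_re.mp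
  simp only [w3, map_sum, starRingEnd_apply, star_mul', entry_star hX, entry_star hY]
  conv_lhs => rw [Finset.sum_comm]
  try exact Finset.sum_congr rfl fun _ _ => Finset.sum_congr rfl fun _ _ =>
    Finset.sum_congr rfl fun _ _ => by ring

set_option maxHeartbeats 1000000 in
theorem statement3 (d : ℕ) (X Y : Matrix (Fin d) (Fin d) ℂ)
    (hX : X.IsHermitian) (hY : Y.IsHermitian) :
    (Matrix.trace (tens4 X X Y Y * psym d 4)).re ≤
      (13 / 6) * (Matrix.trace (tens2 X X * psym d 2)).re *
        (Matrix.trace (tens2 Y Y * psym d 2)).re := by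
  have hx := real_w1 hX
  have hy := real_w1 hY
  have hx2 := real_w2 hX hX
  have hy2 := real_w2 hY hY
  have ha := real_w2 hX hY
  have hb := real_w3 hX hY
  have hc := real_w3' hX hY
  have hp := real_w4 hX hY
  have h2X : (Matrix.trace (tens2 X X * psym d 2)).re
      = (2:ℝ)⁻¹ * ((w1 X).re^2 + (w2 X X).re) := by
    have e : Matrix.trace (tens2 X X * psym d 2)
        = (((2:ℝ)⁻¹ * ((w1 X).re^2 + (w2 X X).re) : ℝ) : ℂ) := by
      rw [trace2_eq d X, ← hx, ← hx2]
      push_cast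
      simp only [Complex.add_re, Complex.add_im, Complex.ofReal_re, Complex.ofReal_im,
        Complex.mul_re, Complex.mul_im, Complex.I_re, Complex.I_im]
      ring
    rw [e, Complex.ofReal_re]
  have h2Y : (Matrix.trace (tens2 Y Y * psym d 2)).re
      = (2:ℝ)⁻¹ * ((w1 Y).re^2 + (w2 Y Y).re) := by
    have e : Matrix.trace (tens2 Y Y * psym d 2)
        = (((2:ℝ)⁻¹ * ((w1 Y).re^2 + (w2 Y Y).re) : ℝ) : ℂ) := by
      rw [trace2_eq d Y, ← hy, ← hy2]
      push_cast
      simp only [Complex.add_re, Complex.add_im, Complex.ofReal_re, Complex.ofReal_im,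
        Complex.mul_re, Complex.mul_im, Complex.I_re, Complex.I_im]
      ring
    rw [e, Complex.ofReal_re]
  have h4 : (Matrix.trace (tens4 X X Y Y * psym d 4)).re
      = (24:ℝ)⁻¹ * ((w1 X).re^2*(w1 Y).re^2 + (w2 X X).re*(w1 Y).re^2
        + (w1 X).re^2*(w2 Y Y).re + 4*((w2 X Y).re*(w1 X).re*(w1 Y).re)
        + (w2 X X).re*(w2 Y Y).re + 2*((w2 X Y).re^2) + 4*((w3 X X Y).re*(w1 Y).re)
        + 4*((w3 X Y Y).re*(w1 X).re) + 4*(w4 X X Y Y).re + 2*(w4 X Y X Y).re) := by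
    have hq := Complex.re_add_im (w4 X Y X Y)
    have e : Matrix.trace (tens4 X X Y Y * psym d 4)
        = (((24:ℝ)⁻¹ * ((w1 X).re^2*(w1 Y).re^2 + (w2 X X).re*(w1 Y).re^2
            + (w1 X).re^2*(w2 Y Y).re + 4*((w2 X Y).re*(w1 X).re*(w1 Y).re)
            + (w2 X X).re*(w2 Y Y).re + 2*((w2 X Y).re^2) + 4*((w3 X X Y).re*(w1 Y).re)
            + 4*((w3 X Y Y).re*(w1 X).re) + 4*(w4 X X Y Y).re + 2*(w4 X Y X Y).re) : ℝ) : ℂ)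
          + (((24:ℝ)⁻¹ * (2*(w4 X Y X Y).im) : ℝ) : ℂ) * Complex.I := by
      rw [trace4_eq d X Y, ← hq, ← hx, ← hy, ← hx2, ← hy2, ← ha, ← hb, ← hc, ← hp]
      push_cast
      simp only [Complex.add_re, Complex.add_im, Complex.ofReal_re, Complex.ofReal_im,
        Complex.mul_re, Complex.mul_im, Complex.I_re, Complex.I_im]
      ring
    rw [e]
    simp [Complex.add_re, Complex.ofReal_re, Complex.mul_re, Complex.I_re,
      Complex.ofReal_im, Complex.I_im, ← Complex.ofReal_pow]
  rw [h4, h2X, h2Y]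
  have B0 := w2_self_nonneg hX
  have B0' := w2_self_nonneg hY
  have B1 := w2_cs hX hY
  have B2 := w3XXY_bound hX hY
  have B3 := w3XYY_bound hX hY
  have B4 := w4P_nonneg hX hY
  have B5 := w4P_le hX hY
  have B6 := w4Q_le hX hY
  have S1 : 4*((w2 X Y).re*(w1 X).re*(w1 Y).re)
      ≤ 2*((w2 X X).re*(w1 Y).re^2) + 2*((w1 X).re^2*(w2 Y Y).re) := by
    nlinarith [sq_nonneg ((w2 X X).re*(w1 Y).re^2 - (w1 X).re^2*(w2 Y Y).re),
      mul_le_mul_of_nonneg_right B1 (sq_nonneg ((w1 X).re*(w1 Y).re)),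
      sq_nonneg ((w1 X).re*(w1 Y).re), mul_nonneg B0 (sq_nonneg (w1 Y).re),
      mul_nonneg B0' (sq_nonneg (w1 X).re),
      sq_nonneg ((w2 X X).re*(w1 Y).re^2 + (w1 X).re^2*(w2 Y Y).re)]
  have S2 : 4*((w3 X X Y).re*(w1 Y).re)
      ≤ 2*((w2 X X).re*(w2 Y Y).re) + 2*((w2 X X).re*(w1 Y).re^2) := by
    rcases eq_or_lt_of_le B0 with h | h
    · have h0 : (w2 X X).re = 0 := h.symm
      have hbr : (w3 X X Y).re = 0 := by
        have h1 : (w3 X X Y).re^2 = 0 := by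
          refine le_antisymm ?_ (sq_nonneg _)
          calc (w3 X X Y).re^2 ≤ ((w2 X X).re * (w2 X X).re) * (w2 Y Y).re := B2
            _ = 0 := by rw [h0]; ring
        exact pow_eq_zero_iff (by norm_num) |>.mp h1
      rw [hbr, h0]
      ring_nf
      simp
    · nlinarith [sq_nonneg ((w3 X X Y).re - (w2 X X).re*(w1 Y).re), B2, mul_pos h h]
  have S3 : 4*((w3 X Y Y).re*(w1 X).re)
      ≤ 2*((w2 X X).re*(w2 Y Y).re) + 2*((w1 X).re^2*(w2 Y Y).re) := by
    rcases eq_or_lt_of_le B0' with h | h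
    · have h0 : (w2 Y Y).re = 0 := h.symm
      have hcr : (w3 X Y Y).re = 0 := by
        have h1 : (w3 X Y Y).re^2 = 0 := by
          refine le_antisymm ?_ (sq_nonneg _)
          calc (w3 X Y Y).re^2 ≤ (w2 X X).re * ((w2 Y Y).re * (w2 Y Y).re) := B3
            _ = 0 := by rw [h0]; ring
        exact pow_eq_zero_iff (by norm_num) |>.mp h1
      rw [hcr, h0]
      ring_nf
      simp
    · nlinarith [sq_nonneg ((w3 X Y Y).re - (w2 Y Y).re*(w1 X).re), B3, mul_pos h h]
  have M1 : (0:ℝ) ≤ (w1 X).re^2*(w1 Y).re^2 := by positivity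
  have M2 : (0:ℝ) ≤ (w2 X X).re*(w1 Y).re^2 := mul_nonneg B0 (sq_nonneg _)
  have M3 : (0:ℝ) ≤ (w1 X).re^2*(w2 Y Y).re := mul_nonneg (sq_nonneg _) B0'
  nlinarith [S1, S2, S3, B1, B4, B5, B6, M1, M2, M3, mul_nonneg B0 B0']
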